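/- Let T be a nonempty finite set with ℓ := |T| elements, and let (c_j)_{j∈T} be real numbers such that Σ_{j∈S} c_j ≠ 0 for every nonempty subset S ⊆ T. Then Σ over all orderings (i₁, i₂, …, i_ℓ) of T (i.e., all bijections from {1,…,ℓ} to T) of the product ∏_{k=1}^{ℓ} 1/(c_{i₁} + c_{i₂} + ⋯ + c_{i_k}) equals 1/∏_{j∈T} c_j. -/

import Mathlib

open Finset

universe u

variable {ι : Type u} [DecidableEq ι] {n : ℕ}

def decomp19 (j : ι) (τ : Fin (n + 1) ≃ {i : ι // i ≠ j}) : Fin (n + 2) ≃ ι :=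
  finSuccEquivLast.trans (τ.optionCongr.trans (Equiv.optionSubtypeNe j))

@[simp] lemma decomp19_castSucc (j : ι) (τ : Fin (n + 1) ≃ {i : ι // i ≠ j}) (m : Fin (n + 1)) :
    decomp19 j τ m.castSucc = (τ m : ι) := by
  simp [decomp19]

@[simp] lemma decomp19_last (j : ι) (τ : Fin (n + 1) ≃ {i : ι // i ≠ j}) :
    decomp19 j τ (Fin.last (n + 1)) = j := by
  simp [decomp19]

lemma decomp19_bij [Fintype ι] (h : Fintype.card ι = n + 2) :
    Function.Bijective (fun p : Σ j : ι, (Fin (n + 1) ≃ {i : ι // i ≠ j}) =>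
      decomp19 p.1 p.2) := by
  constructor
  · rintro ⟨j, τ⟩ ⟨j', τ'⟩ hp
    simp only at hp
    have hj : j = j' := by
      rw [← decomp19_last j τ, hp, decomp19_last]
    subst hj
    have hτ : τ = τ' := by
      ext m
      have := congrFun (congrArg (fun e : Fin (n+2) ≃ ι => (e : Fin (n+2) → ι)) hp) m.castSucc
      simpa using this
    rw [hτ]
  · intro σ
    set j := σ (Fin.last (n + 1)) with hj
    have hne : ∀ m : Fin (n + 1), σ m.castSucc ≠ j := by
      intro m hm
      exact absurd (σ.injective hm) (Fin.ne_last_of_lt (Fin.castSucc_lt_last m))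
    have hcard : Fintype.card {i : ι // i ≠ j} = n + 1 := by
      have h1 : Fintype.card {i : ι // i = j} = 1 := Fintype.card_subtype_eq j
      have h2 := Fintype.card_subtype_compl (fun i : ι => i = j)
      rw [h1, h] at h2
      simpa using h2
    have hbij : Function.Bijective (fun m : Fin (n + 1) =>
        (⟨σ m.castSucc, hne m⟩ : {i : ι // i ≠ j})) := by
      rw [Fintype.bijective_iff_injective_and_card]
      refine ⟨fun a b hab => ?_, by simp [hcard]⟩
      have : σ a.castSucc = σ b.castSucc := congrArg Subtype.val hab
      exact Fin.castSucc_injective _ (σ.injective this)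
    refine ⟨⟨j, Equiv.ofBijective _ hbij⟩, ?_⟩
    ext m
    refine Fin.lastCases ?_ ?_ m
    · simp [hj]
    · intro m'
      simp [Equiv.ofBijective]

lemma filter_le_castSucc19 (k : Fin (n + 1)) :
    Finset.univ.filter (fun m : Fin (n + 2) => m ≤ k.castSucc)
      = (Finset.univ.filter (fun m : Fin (n + 1) => m ≤ k)).map Fin.castSuccEmb := by
  ext m
  simp only [mem_filter, mem_univ, true_and, mem_map, Fin.coe_castSuccEmb]
  constructor
  · intro hm
    have hne : m ≠ Fin.last (n + 1) := by
      intro hm'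
      rw [hm'] at hm
      exact absurd (lt_of_le_of_lt hm (Fin.castSucc_lt_last k)) (lt_irrefl _)
    obtain ⟨m', rfl⟩ := Fin.exists_castSucc_eq.mpr hne
    exact ⟨m', Fin.castSucc_le_castSucc_iff.mp hm, rfl⟩
  · rintro ⟨m', hm', rfl⟩
    exact Fin.castSucc_le_castSucc_iff.mpr hm'

theorem aux19 (n : ℕ) : ∀ (ι : Type u) [Fintype ι] [DecidableEq ι] (c : ι → ℝ),
    Fintype.card ι = n + 1 →
    (∀ S : Finset ι, S.Nonempty → ∑ j ∈ S, c j ≠ 0) →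
    ∑ σ : Fin (n + 1) ≃ ι,
        ∏ k : Fin (n + 1),
          (∑ m ∈ Finset.univ.filter (fun m : Fin (n + 1) => m ≤ k), c (σ m))⁻¹
      = (∏ j, c j)⁻¹ := by
  induction n with
  | zero =>
    intro ι _ _ c hcard hgen
    obtain ⟨a, ha⟩ := Fintype.card_eq_one_iff.mp hcard
    have huniv : (Finset.univ : Finset ι) = {a} := by
      ext x; simp [ha x]
    have hfilter : (Finset.univ.filter (fun m : Fin 1 => m ≤ 0)) = {0} := by decide
    have hval : ∀ σ : Fin 1 ≃ ι, ∏ k : Fin 1,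
        (∑ m ∈ Finset.univ.filter (fun m : Fin 1 => m ≤ k), c (σ m))⁻¹ = (c a)⁻¹ := by
      intro σ
      rw [Fin.prod_univ_one, hfilter, Finset.sum_singleton, ha (σ 0)]
    rw [Finset.sum_congr rfl (fun σ _ => hval σ), Finset.sum_const, huniv, Finset.prod_singleton]
    have hc1 : Fintype.card (Fin 1 ≃ ι) = 1 := by
      rw [Fintype.card_equiv (Fintype.equivOfCardEq (by simp [hcard]))]; simp [hcard]
    simp [Finset.card_univ, hc1]
  | succ n IH =>
    intro ι _ _ c hcard hgen
    have hc0 : ∀ i : ι, c i ≠ 0 := fun i => by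
      simpa using hgen {i} ⟨i, Finset.mem_singleton_self i⟩
    have hprod : ∏ j, c j ≠ 0 := Finset.prod_ne_zero_iff.mpr fun i _ => hc0 i
    have hnonempty : (Finset.univ : Finset ι).Nonempty := by
      rw [← Finset.card_pos, Finset.card_univ, hcard]; omega
    have hsum : ∑ i, c i ≠ 0 := hgen Finset.univ hnonempty
    -- reindex the sum over equivs by the sigma type
    rw [← Fintype.sum_bijective _ (decomp19_bij hcard)
      (fun p : Σ j : ι, (Fin (n + 1) ≃ {i : ι // i ≠ j}) =>
        ∏ k : Fin (n + 2),
          (∑ m ∈ Finset.univ.filter (fun m : Fin (n + 2) => m ≤ k), c (decomp19 p.1 p.2 m))⁻¹)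
      _ (fun p => rfl)]
    rw [← Finset.univ_sigma_univ, Finset.sum_sigma]
    have key : ∀ (j : ι) (τ : Fin (n + 1) ≃ {i : ι // i ≠ j}),
        ∏ k : Fin (n + 2),
          (∑ m ∈ Finset.univ.filter (fun m : Fin (n + 2) => m ≤ k), c (decomp19 j τ m))⁻¹
        = (∏ k : Fin (n + 1),
            (∑ m ∈ Finset.univ.filter (fun m : Fin (n + 1) => m ≤ k), c ((τ m : ι)))⁻¹)
            * (∑ i, c i)⁻¹ := by
      intro j τ
      rw [Fin.prod_univ_castSucc]
      congr 1
      · refine Finset.prod_congr rfl fun k _ => ?_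
        congr 1
        rw [filter_le_castSucc19, Finset.sum_map]
        refine Finset.sum_congr rfl fun m _ => ?_
        show c (decomp19 j τ m.castSucc) = c ((τ m : ι))
        rw [decomp19_castSucc]
      · congr 1
        have : Finset.univ.filter (fun m : Fin (n + 2) => m ≤ Fin.last (n + 1))
            = Finset.univ := by
          ext m; simp [Fin.le_last]
        rw [this]
        exact Equiv.sum_comp (decomp19 j τ) c
    rw [Finset.sum_congr rfl fun j _ => Finset.sum_congr rfl fun τ _ => key j τ]
    -- apply the inductive hypothesis on each subtype
    have hsub : ∀ j : ι,
        ∑ τ : Fin (n + 1) ≃ {i : ι // i ≠ j},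
          ∏ k : Fin (n + 1),
            (∑ m ∈ Finset.univ.filter (fun m : Fin (n + 1) => m ≤ k), c ((τ m : ι)))⁻¹
        = (∏ i' : {i : ι // i ≠ j}, c (i' : ι))⁻¹ := by
      intro j
      refine IH {i : ι // i ≠ j} (fun i' => c (i' : ι)) ?_ ?_
      · have h1 : Fintype.card {i : ι // i = j} = 1 := Fintype.card_subtype_eq j
        have h2 := Fintype.card_subtype_compl (fun i : ι => i = j)
        rw [h1, hcard] at h2
        simpa using h2
      · intro S hS
        have : ∑ i' ∈ S, c (i' : ι)
            = ∑ i ∈ S.map (Function.Embedding.subtype _), c i := by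
          rw [Finset.sum_map]; rfl
        rw [this]
        exact hgen _ hS.map
    rw [Finset.sum_congr rfl fun j _ => by rw [← Finset.sum_mul, hsub j]]
    -- finish with algebra
    have hps : ∀ j : ι, (∏ i' : {i : ι // i ≠ j}, c (i' : ι)) = ∏ i ∈ Finset.univ.erase j, c i := by
      intro j
      exact (Finset.prod_subtype (p := fun i => i ≠ j) (Finset.univ.erase j)
        (fun x => by simp) c).symm
    have herase : ∀ j : ι, c j * ∏ i ∈ Finset.univ.erase j, c i = ∏ i, c i :=
      fun j => Finset.mul_prod_erase Finset.univ c (Finset.mem_univ j)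
    have hstep : ∀ j : ι, (∏ i' : {i : ι // i ≠ j}, c (i' : ι))⁻¹ * (∑ i, c i)⁻¹
        = c j * (∏ i, c i)⁻¹ * (∑ i, c i)⁻¹ := by
      intro j
      have hPne : ∏ i ∈ Finset.univ.erase j, c i ≠ 0 :=
        Finset.prod_ne_zero_iff.mpr fun i _ => hc0 i
      rw [hps j, ← herase j, mul_inv, ← mul_assoc, mul_inv_cancel₀ (hc0 j), one_mul]
    rw [Finset.sum_congr rfl fun j _ => hstep j]
    rw [← Finset.sum_mul, ← Finset.sum_mul]
    field_simp

/-- Sum over all orderings of a nonempty finite index set `ι` of the product of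
reciprocals of the partial sums equals the reciprocal of the product, provided
every nonempty partial sum is nonzero. -/
theorem stmt_19 (ι : Type*) [Fintype ι] [DecidableEq ι] [Nonempty ι]
    (c : ι → ℝ)
    (hgen : ∀ S : Finset ι, S.Nonempty → ∑ j ∈ S, c j ≠ 0) :
    ∑ σ : Fin (Fintype.card ι) ≃ ι,
        ∏ k : Fin (Fintype.card ι),
          (∑ m ∈ Finset.univ.filter (fun m : Fin (Fintype.card ι) => m ≤ k), c (σ m))⁻¹
      = (∏ j, c j)⁻¹ := by
  obtain ⟨n, hn⟩ : ∃ n, Fintype.card ι = n + 1 :=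
    ⟨Fintype.card ι - 1, by have := Fintype.card_pos (α := ι); omega⟩
  rw [hn]
  exact aux19 n ι c hn hgen
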